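/- (Distance instability.) For each m let Z^m, X^m_1, …, X^m_ℓ be random points and dist^m a nonnegative function of pairs of points, with all dist^m(Z^m, X^m_i) (i ≤ ℓ) identically distributed with finite positive mean μ_m = E[(dist^m(Z^m, X^m_i))^p] for some fixed p > 0. Suppose Var[(dist^m(Z^m, X^m_i))^p / μ_m] → 0 as m → ∞. Define D^m_min = min_i dist^m(Z^m, X^m_i) and D^m_max = max_i dist^m(Z^m, X^m_i). Then for every ε > 0, P(D^m_max ≤ (1+ε) D^m_min) → 1 as m → ∞. -/

import Mathlib

open MeasureTheory ProbabilityTheory Filter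

theorem distance_instability
    (l : ℕ) (hl : 0 < l)
    (Om : ℕ → Type*) [∀ m, MeasurableSpace (Om m)]
    (μ : ∀ m, Measure (Om m)) (hprob : ∀ m, IsProbabilityMeasure (μ m))
    (D : ∀ m, Fin l → Om m → ℝ)
    (hmeas : ∀ m i, Measurable (D m i))
    (hnonneg : ∀ m i ω, 0 ≤ D m i ω)
    (p : ℝ) (hp : 0 < p)
    (mu : ℕ → ℝ)
    (hmu : ∀ m i, ∫ ω, (D m i ω) ^ p ∂(μ m) = mu m)
    (hmupos : ∀ m, 0 < mu m)
    (hident : ∀ m i, (μ m).map (D m i) = (μ m).map (D m ⟨0, hl⟩))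
    (hL2 : ∀ m i, MemLp (fun ω => (D m i ω) ^ p) 2 (μ m))
    (hvar : Tendsto
      (fun m => variance (fun ω => (D m ⟨0, hl⟩ ω) ^ p / mu m) (μ m))
      atTop (nhds 0)) :
    ∀ ε > (0 : ℝ),
      Tendsto
        (fun m => μ m {ω |
          (Finset.univ.sup' ⟨⟨0, hl⟩, Finset.mem_univ _⟩ fun i => D m i ω)
            ≤ (1 + ε) *
          (Finset.univ.inf' ⟨⟨0, hl⟩, Finset.mem_univ _⟩ fun i => D m i ω)})
        atTop (nhds 1) := by
  intro ε hε
  have i0 : Fin l := ⟨0, hl⟩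
  set c : ℝ := (1 + ε) ^ p with hc_def
  have hc1 : 1 < c := by
    rw [hc_def, Real.one_lt_rpow_iff_of_pos (by linarith)]
    exact Or.inl ⟨by linarith, hp⟩
  set δ : ℝ := (c - 1) / (c + 1) with hδ_def
  have hδpos : 0 < δ := by
    apply div_pos <;> linarith
  have hδ1 : δ < 1 := by
    rw [hδ_def, div_lt_one (by linarith)]; linarith
  have hkey : 1 + δ = c * (1 - δ) := by
    rw [hδ_def]; field_simp; ring
  -- ℒ2 of normalized variables
  have hYL2 : ∀ m i, MemLp (fun ω => (D m i ω) ^ p / mu m) 2 (μ m) := by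
    intro m i
    simpa [div_eq_inv_mul] using (hL2 m i).const_mul (mu m)⁻¹
  -- mean of normalized variables is 1
  have hmean : ∀ m i, ∫ ω, (D m i ω) ^ p / mu m ∂(μ m) = 1 := by
    intro m i
    rw [integral_div, hmu m i, div_self (hmupos m).ne']
  -- variances are equal across i
  have hvar_eq : ∀ m i, variance (fun ω => (D m i ω) ^ p / mu m) (μ m)
      = variance (fun ω => (D m ⟨0, hl⟩ ω) ^ p / mu m) (μ m) := by
    intro m i
    have hg : Measurable (fun x : ℝ => x ^ p / mu m) :=
      (Real.continuous_rpow_const hp.le).measurable.div_const _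
    have e1 : ∀ j : Fin l, ∫ ω, ((D m j ω) ^ p / mu m) ^ 2 ∂(μ m)
        = ∫ x, (x ^ p / mu m) ^ 2 ∂((μ m).map (D m ⟨0, hl⟩)) := by
      intro j
      rw [← hident m j,
        integral_map (hmeas m j).aemeasurable (hg.pow_const 2).aestronglyMeasurable]
    have e2 : ∀ j : Fin l, ∫ ω, (D m j ω) ^ p / mu m ∂(μ m)
        = ∫ x, x ^ p / mu m ∂((μ m).map (D m ⟨0, hl⟩)) := by
      intro j
      rw [← hident m j, integral_map (hmeas m j).aemeasurable hg.aestronglyMeasurable]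
    rw [variance_eq_sub (hYL2 m i), variance_eq_sub (hYL2 m ⟨0, hl⟩)]
    simp only [Pi.pow_apply]
    rw [e1 i, e2 i, e1 ⟨0, hl⟩, e2 ⟨0, hl⟩]
  -- Chebyshev
  have cheb : ∀ m i, μ m {ω | δ ≤ |(D m i ω) ^ p / mu m - 1|}
      ≤ ENNReal.ofReal
        (variance (fun ω => (D m ⟨0, hl⟩ ω) ^ p / mu m) (μ m) / δ ^ 2) := by
    intro m i
    have h := meas_ge_le_variance_div_sq (hYL2 m i) hδpos
    rw [hmean m i, hvar_eq m i] at h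
    exact h
  -- inclusion of the complement of the good event in the union of deviation events
  have hsub : ∀ m, {ω |
      (Finset.univ.sup' ⟨⟨0, hl⟩, Finset.mem_univ _⟩ fun i => D m i ω)
        ≤ (1 + ε) *
      (Finset.univ.inf' ⟨⟨0, hl⟩, Finset.mem_univ _⟩ fun i => D m i ω)}ᶜ
      ⊆ ⋃ i : Fin l, {ω | δ ≤ |(D m i ω) ^ p / mu m - 1|} := by
    intro m ω hω
    by_contra hnot
    apply hω
    simp only [Set.mem_iUnion, Set.mem_setOf_eq, not_exists, not_le] at hnot
    have hbnd : ∀ i : Fin l, (1 - δ) * mu m ≤ (D m i ω) ^ p ∧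
        (D m i ω) ^ p ≤ (1 + δ) * mu m := by
      intro i
      have h := abs_lt.mp (hnot i)
      constructor
      · have : 1 - δ < (D m i ω) ^ p / mu m := by linarith [h.1]
        calc (1 - δ) * mu m ≤ ((D m i ω) ^ p / mu m) * mu m := by
              exact mul_le_mul_of_nonneg_right this.le (hmupos m).le
          _ = (D m i ω) ^ p := div_mul_cancel₀ _ (hmupos m).ne'
      · have : (D m i ω) ^ p / mu m < 1 + δ := by linarith [h.2]
        calc (D m i ω) ^ p = ((D m i ω) ^ p / mu m) * mu m :=
              (div_mul_cancel₀ _ (hmupos m).ne').symm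
          _ ≤ (1 + δ) * mu m := mul_le_mul_of_nonneg_right this.le (hmupos m).le
    show (Finset.univ.sup' _ fun i => D m i ω) ≤ (1 + ε) * (Finset.univ.inf' _ fun i => D m i ω)
    obtain ⟨j, -, hj⟩ := Finset.exists_mem_eq_inf' (⟨⟨0, hl⟩, Finset.mem_univ _⟩ :
      (Finset.univ : Finset (Fin l)).Nonempty) (fun i => D m i ω)
    rw [hj]
    apply Finset.sup'_le
    intro i _
    have hpow : (D m i ω) ^ p ≤ ((1 + ε) * D m j ω) ^ p := by
      rw [Real.mul_rpow (by linarith) (hnonneg m j ω), ← hc_def]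
      calc (D m i ω) ^ p ≤ (1 + δ) * mu m := (hbnd i).2
        _ = c * ((1 - δ) * mu m) := by rw [hkey]; ring
        _ ≤ c * (D m j ω) ^ p := by
            exact mul_le_mul_of_nonneg_left (hbnd j).1 (by linarith)
    exact (Real.rpow_le_rpow_iff (hnonneg m i ω)
      (mul_nonneg (by linarith) (hnonneg m j ω)) hp).mp hpow
  -- measure of complement tends to 0
  have hmeas_S : ∀ m, MeasurableSet {ω |
      (Finset.univ.sup' ⟨⟨0, hl⟩, Finset.mem_univ _⟩ fun i => D m i ω)
        ≤ (1 + ε) *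
      (Finset.univ.inf' ⟨⟨0, hl⟩, Finset.mem_univ _⟩ fun i => D m i ω)} := by
    intro m
    have h1 : Measurable (fun ω =>
        Finset.univ.sup' (⟨⟨0, hl⟩, Finset.mem_univ _⟩ :
          (Finset.univ : Finset (Fin l)).Nonempty) fun i => D m i ω) := by
      have h := Finset.measurable_sup' (⟨⟨0, hl⟩, Finset.mem_univ _⟩ :
          (Finset.univ : Finset (Fin l)).Nonempty) (fun i _ => hmeas m i)
      have he : (Finset.univ.sup' (⟨⟨0, hl⟩, Finset.mem_univ _⟩ :
          (Finset.univ : Finset (Fin l)).Nonempty) (D m))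
          = fun ω => Finset.univ.sup' (⟨⟨0, hl⟩, Finset.mem_univ _⟩ :
          (Finset.univ : Finset (Fin l)).Nonempty) fun i => D m i ω := by
        ext ω; exact Finset.sup'_apply _ _ _
      rwa [he] at h
    have h2 : Measurable (fun ω =>
        Finset.univ.inf' (⟨⟨0, hl⟩, Finset.mem_univ _⟩ :
          (Finset.univ : Finset (Fin l)).Nonempty) fun i => D m i ω) := by
      have h : Measurable (Finset.univ.inf' (⟨⟨0, hl⟩, Finset.mem_univ _⟩ :
          (Finset.univ : Finset (Fin l)).Nonempty) (D m)) :=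
        Finset.inf'_induction _ _ (fun f hf g hg => hf.inf hg) (fun i _ => hmeas m i)
      have he : (Finset.univ.inf' (⟨⟨0, hl⟩, Finset.mem_univ _⟩ :
          (Finset.univ : Finset (Fin l)).Nonempty) (D m))
          = fun ω => Finset.univ.inf' (⟨⟨0, hl⟩, Finset.mem_univ _⟩ :
          (Finset.univ : Finset (Fin l)).Nonempty) fun i => D m i ω := by
        ext ω; exact Finset.inf'_apply _ _ _
      rwa [he] at h
    exact measurableSet_le h1 (h2.const_mul _)
  have hcompl_le : ∀ m, μ m ({ω |
      (Finset.univ.sup' ⟨⟨0, hl⟩, Finset.mem_univ _⟩ fun i => D m i ω)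
        ≤ (1 + ε) *
      (Finset.univ.inf' ⟨⟨0, hl⟩, Finset.mem_univ _⟩ fun i => D m i ω)}ᶜ)
      ≤ ENNReal.ofReal ((l : ℝ) *
        (variance (fun ω => (D m ⟨0, hl⟩ ω) ^ p / mu m) (μ m) / δ ^ 2)) := by
    intro m
    refine le_trans (measure_mono (hsub m)) ?_
    calc μ m (⋃ i : Fin l, {ω | δ ≤ |(D m i ω) ^ p / mu m - 1|})
        ≤ ∑' i : Fin l, μ m {ω | δ ≤ |(D m i ω) ^ p / mu m - 1|} := measure_iUnion_le _
      _ = ∑ i : Fin l, μ m {ω | δ ≤ |(D m i ω) ^ p / mu m - 1|} := tsum_fintype _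
      _ ≤ ∑ _i : Fin l, ENNReal.ofReal
            (variance (fun ω => (D m ⟨0, hl⟩ ω) ^ p / mu m) (μ m) / δ ^ 2) :=
          Finset.sum_le_sum fun i _ => cheb m i
      _ = (l : ENNReal) * ENNReal.ofReal
            (variance (fun ω => (D m ⟨0, hl⟩ ω) ^ p / mu m) (μ m) / δ ^ 2) := by
          simp [Finset.sum_const, nsmul_eq_mul]
      _ = ENNReal.ofReal ((l : ℝ) *
            (variance (fun ω => (D m ⟨0, hl⟩ ω) ^ p / mu m) (μ m) / δ ^ 2)) := by
          rw [ENNReal.ofReal_mul (by positivity), ENNReal.ofReal_natCast]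
  have hcompl_tendsto : Tendsto (fun m => μ m ({ω |
      (Finset.univ.sup' ⟨⟨0, hl⟩, Finset.mem_univ _⟩ fun i => D m i ω)
        ≤ (1 + ε) *
      (Finset.univ.inf' ⟨⟨0, hl⟩, Finset.mem_univ _⟩ fun i => D m i ω)}ᶜ))
      atTop (nhds 0) := by
    have hub : Tendsto (fun m => ENNReal.ofReal ((l : ℝ) *
        (variance (fun ω => (D m ⟨0, hl⟩ ω) ^ p / mu m) (μ m) / δ ^ 2)))
        atTop (nhds 0) := by
      have : Tendsto (fun m => (l : ℝ) *
          (variance (fun ω => (D m ⟨0, hl⟩ ω) ^ p / mu m) (μ m) / δ ^ 2))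
          atTop (nhds ((l : ℝ) * (0 / δ ^ 2))) :=
        Tendsto.const_mul _ (hvar.div_const _)
      simpa only [ENNReal.ofReal_zero, Function.comp_def] using (ENNReal.continuous_ofReal.tendsto 0).comp (by simpa using this)
    exact tendsto_of_tendsto_of_tendsto_of_le_of_le tendsto_const_nhds hub
      (fun m => zero_le) hcompl_le
  have heq : ∀ m, μ m {ω |
      (Finset.univ.sup' ⟨⟨0, hl⟩, Finset.mem_univ _⟩ fun i => D m i ω)
        ≤ (1 + ε) *
      (Finset.univ.inf' ⟨⟨0, hl⟩, Finset.mem_univ _⟩ fun i => D m i ω)}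
      = 1 - μ m ({ω |
      (Finset.univ.sup' ⟨⟨0, hl⟩, Finset.mem_univ _⟩ fun i => D m i ω)
        ≤ (1 + ε) *
      (Finset.univ.inf' ⟨⟨0, hl⟩, Finset.mem_univ _⟩ fun i => D m i ω)}ᶜ) := by
    intro m
    have := prob_compl_eq_one_sub (μ := μ m) (hmeas_S m).compl
    rwa [compl_compl] at this
  have final := ((ENNReal.continuous_sub_left ENNReal.one_ne_top).tendsto 0).comp
    hcompl_tendsto
  simp only [Function.comp_def, tsub_zero] at final
  exact final.congr fun m => (heq m).symm
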